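/- Let λ be an infinite cardinal and let X be a compact Hausdorff space with X ∈ Γ(λ) and X ∈ Δ(λ). Then λ ∈ dd(X), i.e. X has a dense subspace of density λ. -/

import Mathlib

open Cardinal Set Function

universe u

noncomputable section

/-- The density of a topological space: least cardinality of a dense subset. -/
def tdensity (X : Type u) [TopologicalSpace X] : Cardinal.{u} :=
  sInf {c : Cardinal.{u} | ∃ s : Set X, Dense s ∧ #s = c}

/-- The weight of a topological space: least cardinality of a base. -/
def tweight (X : Type u) [TopologicalSpace X] : Cardinal.{u} :=
  sInf {c : Cardinal.{u} | ∃ B : Set (Set X), TopologicalSpace.IsTopologicalBasis B ∧ #B = c}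

/-- The π-weight: least cardinality of a π-base. -/
def piWeight (X : Type u) [TopologicalSpace X] : Cardinal.{u} :=
  sInf {c : Cardinal.{u} | ∃ B : Set (Set X),
    (∀ U ∈ B, IsOpen U ∧ U.Nonempty) ∧
    (∀ V : Set X, IsOpen V → V.Nonempty → ∃ U ∈ B, U ⊆ V) ∧ #B = c}

/-- ĉ(X): the least cardinal κ such that X has no pairwise disjoint family of κ
nonempty open sets. -/
def hatCell (X : Type u) [TopologicalSpace X] : Cardinal.{u} :=
  sInf {c : Cardinal.{u} | ¬ ∃ 𝒰 : Set (Set X),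
    (∀ U ∈ 𝒰, IsOpen U ∧ U.Nonempty) ∧ 𝒰.PairwiseDisjoint id ∧ #𝒰 = c}

/-- `H` is a closed G_λ set: closed and the intersection of at most λ open sets. -/
def IsClosedGLambda (lam : Cardinal.{u}) {X : Type u} [TopologicalSpace X] (H : Set X) : Prop :=
  IsClosed H ∧ ∃ 𝒰 : Set (Set X), (∀ U ∈ 𝒰, IsOpen U) ∧ #𝒰 ≤ lam ∧ H = ⋂₀ 𝒰

/-- X ∈ Γ(λ): every closed G_λ set has density ≤ λ. -/
def InGamma (lam : Cardinal.{u}) (X : Type u) [TopologicalSpace X] : Prop :=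
  ∀ H : Set X, IsClosedGLambda lam H → tdensity ↥H ≤ lam

/-- `S` witnesses `X ∈ Δ(λ)`. -/
def DeltaWitness (lam : Cardinal.{u}) (X : Type u) [TopologicalSpace X] (S : Set X) : Prop :=
  Dense S ∧
  (∀ T : Set X, T ⊆ S → #T < lam → tweight ↥(closure T) < lam) ∧
  (∀ (Y : Type u) (_ : TopologicalSpace Y), T2Space Y → ∀ f : X → Y,
     Continuous f → Surjective f → tweight Y = lam → #(f '' S) = lam)

/-- X ∈ Δ(λ). -/
def InDelta (lam : Cardinal.{u}) (X : Type u) [TopologicalSpace X] : Prop :=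
  lam ≤ tweight X ∧ ∃ S : Set X, DeltaWitness lam X S

/-- A canonical discrete space of cardinality `c`. -/
instance (c : Cardinal.{u}) : TopologicalSpace c.out := ⊥

instance (c : Cardinal.{u}) : DiscreteTopology c.out := ⟨rfl⟩

/-- A(μ): one-point compactification of a discrete space of cardinality μ. -/
def ACompact (μ : Cardinal.{u}) : Type u := OnePoint μ.out

instance (μ : Cardinal.{u}) : TopologicalSpace (ACompact μ) :=
  inferInstanceAs (TopologicalSpace (OnePoint μ.out))

/-- A(μ)^κ. -/
def APow (μ κ : Cardinal.{u}) : Type u := κ.out → ACompact μ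

instance (μ κ : Cardinal.{u}) : TopologicalSpace (APow μ κ) :=
  inferInstanceAs (TopologicalSpace (κ.out → ACompact μ))

/-- The set of finite-support points of A(μ)^κ. -/
def finSupport (μ κ : Cardinal.{u}) : Set (APow μ κ) :=
  {x | {ξ | x ξ ≠ (OnePoint.infty : OnePoint μ.out)}.Finite}

/-- X is polyadic: a continuous image of some A(μ)^κ. -/
def IsPolyadic (X : Type u) [TopologicalSpace X] : Prop :=
  ∃ μ κ : Cardinal.{u}, ℵ₀ ≤ μ ∧ ∃ f : APow μ κ → X, Continuous f ∧ Surjective f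


section Aux
open TopologicalSpace Topology Classical

variable {X : Type u} [TopologicalSpace X]

lemma tweight_le_card_basis {B : Set (Set X)} (hB : IsTopologicalBasis B) :
    tweight X ≤ #B := csInf_le' ⟨B, hB, rfl⟩

lemma exists_basis_tweight (X : Type u) [TopologicalSpace X] :
    ∃ B : Set (Set X), IsTopologicalBasis B ∧ #B = tweight X := by
  have : {c : Cardinal.{u} | ∃ B : Set (Set X), IsTopologicalBasis B ∧ #B = c}.Nonempty :=
    ⟨_, _, isTopologicalBasis_opens, rfl⟩
  exact csInf_mem this

lemma tdensity_le_card_dense {s : Set X} (hs : Dense s) : tdensity X ≤ #s :=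
  csInf_le' ⟨s, hs, rfl⟩

lemma exists_dense_tdensity (X : Type u) [TopologicalSpace X] :
    ∃ s : Set X, Dense s ∧ #s = tdensity X := by
  have : {c : Cardinal.{u} | ∃ s : Set X, Dense s ∧ #s = c}.Nonempty :=
    ⟨_, _, dense_univ, rfl⟩
  exact csInf_mem this

lemma le_tdensity (a : Cardinal.{u}) (h : ∀ s : Set X, Dense s → a ≤ #s) :
    a ≤ tdensity X := by
  have hne : {c : Cardinal.{u} | ∃ s : Set X, Dense s ∧ #s = c}.Nonempty :=
    ⟨_, univ, dense_univ, rfl⟩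
  apply le_csInf hne
  rintro c ⟨s, hs, rfl⟩; exact h s hs

lemma tweight_le_of_isInducing {Y : Type u} [TopologicalSpace Y] {f : X → Y}
    (hf : IsInducing f) : tweight X ≤ tweight Y := by
  obtain ⟨B, hB, hcard⟩ := exists_basis_tweight Y
  calc tweight X ≤ #((preimage f) '' B) := tweight_le_card_basis (hB.isInducing hf)
    _ ≤ #B := mk_image_le
    _ = tweight Y := hcard

lemma tweight_eq_of_homeomorph {Y : Type u} [TopologicalSpace Y] (h : X ≃ₜ Y) :
    tweight X = tweight Y :=
  le_antisymm (tweight_le_of_isInducing h.isInducing)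
    (tweight_le_of_isInducing h.symm.isInducing)


lemma mk_finset_le_max (ι : Type u) : #(Finset ι) ≤ max #ι ℵ₀ := by
  rcases finite_or_infinite ι with h | h
  · exact le_max_of_le_right (mk_le_aleph0)
  · rw [mk_finset_of_infinite]; exact le_max_left _ _

lemma tweight_pi_le' (ι : Type u) :
    ∃ P : Set (Set (ι → ℝ)), IsTopologicalBasis P ∧ #P ≤ max #ι ℵ₀ := by
  obtain ⟨b, hbc, -, hb⟩ := exists_countable_basis ℝ
  haveI : Countable ↥b := hbc.to_subtype
  refine ⟨_, isTopologicalBasis_pi fun _ : ι => hb, ?_⟩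
  set P := { S : Set (ι → ℝ) | ∃ (U : ι → Set ℝ) (F : Finset ι),
      (∀ i, i ∈ F → U i ∈ b) ∧ S = (F : Set ι).pi U }
  have hsurj : Surjective (fun p : Σ F : Finset ι, ({ i // i ∈ F } → ↥b) =>
      (⟨(p.1 : Set ι).pi (fun i => if h : i ∈ p.1 then (p.2 ⟨i, h⟩ : Set ℝ) else univ),
        ⟨_, p.1, fun i hi => by rw [dif_pos hi]; exact Subtype.coe_prop _, rfl⟩⟩ : ↥P)) := by
    rintro ⟨S, U, F, hU, rfl⟩
    refine ⟨⟨F, fun i => ⟨U i, hU i i.2⟩⟩, ?_⟩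
    apply Subtype.ext
    simp only
    apply Set.pi_congr rfl
    intro i hi
    rw [dif_pos (Finset.mem_coe.mp hi)]
  calc #P ≤ #(Σ F : Finset ι, ({ i // i ∈ F } → ↥b)) := mk_le_of_surjective hsurj
    _ = Cardinal.sum (fun F : Finset ι => #({ i // i ∈ F } → ↥b)) := by rw [mk_sigma]
    _ ≤ Cardinal.sum (fun _ : Finset ι => ℵ₀) := Cardinal.sum_le_sum _ _ (fun F => mk_le_aleph0)
    _ = #(Finset ι) * ℵ₀ := by rw [Cardinal.sum_const, lift_id, lift_id]
    _ ≤ max #ι ℵ₀ * ℵ₀ := by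
        exact mul_le_mul_left (mk_finset_le_max ι) _
    _ ≤ max #ι ℵ₀ := by
        apply Cardinal.mul_le_max_of_aleph0_le_left (le_max_right _ _) |>.trans
        simp


lemma finite_of_tweight_lt_aleph0 [T2Space X] (h : tweight X < ℵ₀) : Finite X := by
  obtain ⟨B, hB, hcard⟩ := exists_basis_tweight X
  haveI : Finite ↥B := mk_lt_aleph0_iff.mp (hcard ▸ h)
  haveI : Finite (Set ↥B) := inferInstance
  apply Finite.of_injective (fun x : X => ({u : ↥B | x ∈ (u : Set X)} : Set ↥B))
  intro x y hxy
  have hxy' : {u : ↥B | x ∈ (u : Set X)} = {u : ↥B | y ∈ (u : Set X)} := hxy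
  by_contra hne
  obtain ⟨U, V, hU, hV, hxU, hyV, hUV⟩ := t2_separation hne
  obtain ⟨v, hvB, hxv, hvU⟩ := hB.exists_subset_of_mem_open hxU hU
  have hx' : (⟨v, hvB⟩ : ↥B) ∈ {u : ↥B | x ∈ (u : Set X)} := hxv
  rw [hxy'] at hx'
  exact Set.disjoint_left.mp hUV (hvU hx') hyV

lemma tweight_lt_aleph0_of_finite [Finite X] : tweight X < ℵ₀ := by
  have h1 : tweight X ≤ #{U : Set X | IsOpen U} := tweight_le_card_basis isTopologicalBasis_opens
  have h2 : #{U : Set X | IsOpen U} ≤ #(Set X) := mk_subtype_le _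
  exact lt_of_le_of_lt (h1.trans h2) (mk_lt_aleph0_iff.mpr inferInstance)

lemma tweight_image_le {A B : Type u} [TopologicalSpace A] [TopologicalSpace B]
    [CompactSpace A] [T2Space B] {f : A → B} (hf : Continuous f) (hs : Surjective f) :
    tweight B ≤ max (tweight A) ℵ₀ := by
  classical
  obtain ⟨Bas, hBas, hcard⟩ := exists_basis_tweight A
  have hclosed : IsClosedMap f := hf.isClosedMap
  set F : Finset ↥Bas → Set B := fun t => (f '' (⋃ i ∈ t, (i : Set A))ᶜ)ᶜ with hF
  have hopen : ∀ t, IsOpen (F t) := fun t =>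
    isOpen_compl_iff.mpr <| hclosed _ <| isClosed_compl_iff.mpr <|
      isOpen_biUnion (fun i _ => hBas.isOpen i.2)
  have hbasis : IsTopologicalBasis (Set.range F) := by
    apply isTopologicalBasis_of_isOpen_of_nhds
    · rintro u ⟨t, rfl⟩; exact hopen t
    · intro y W hyW hW
      have hK : IsCompact (f ⁻¹' {y}) := ((isClosed_singleton).preimage hf).isCompact
      have hKW : f ⁻¹' {y} ⊆ f ⁻¹' W := preimage_mono (singleton_subset_iff.mpr hyW)
      have hcov : f ⁻¹' {y} ⊆ ⋃ v : {v : ↥Bas // (v : Set A) ⊆ f ⁻¹' W}, (v.1 : Set A) := by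
        intro x hx
        obtain ⟨v, hvB, hxv, hvW⟩ := hBas.exists_subset_of_mem_open (hKW hx) (hW.preimage hf)
        exact mem_iUnion.mpr ⟨⟨⟨v, hvB⟩, hvW⟩, hxv⟩
      obtain ⟨t, ht⟩ := hK.elim_finite_subcover _
        (fun v : {v : ↥Bas // (v : Set A) ⊆ f ⁻¹' W} => hBas.isOpen v.1.2) hcov
      refine ⟨F (t.image (fun v => v.1)), ⟨_, rfl⟩, ?_, ?_⟩
      · intro hy
        obtain ⟨x, hx, hfx⟩ := hy
        apply hx
        have hxfib : x ∈ f ⁻¹' {y} := by simp [hfx]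
        obtain ⟨v, hvt, hxv⟩ := mem_iUnion₂.mp (ht hxfib)
        exact mem_iUnion₂.mpr ⟨v.1, Finset.mem_image_of_mem _ hvt, hxv⟩
      · intro z hz
        obtain ⟨x, hfx⟩ := hs z
        by_cases hx : x ∈ ⋃ i ∈ t.image (fun v => (v.1 : ↥Bas)), (i : Set A)
        · obtain ⟨v, hvt', hxv⟩ := mem_iUnion₂.mp hx
          obtain ⟨j, hjt, hjv⟩ := Finset.mem_image.mp hvt'
          have hsub : (v : Set A) ⊆ f ⁻¹' W := by rw [← hjv]; exact j.2
          rw [← hfx]; exact hsub hxv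
        · exact absurd (⟨x, hx, hfx⟩ : z ∈ f '' (⋃ i ∈ t.image (fun v => (v.1 : ↥Bas)), (i : Set A))ᶜ) hz
  calc tweight B ≤ #(Set.range F) := tweight_le_card_basis hbasis
    _ ≤ #(Finset ↥Bas) := mk_range_le
    _ ≤ max #↥Bas ℵ₀ := mk_finset_le_max _
    _ = max (tweight A) ℵ₀ := by rw [hcard]

lemma tweight_image_lt {A B : Type u} [TopologicalSpace A] [TopologicalSpace B]
    [CompactSpace A] [T2Space A] [T2Space B] {f : A → B} (hf : Continuous f)
    (hs : Surjective f) {lam : Cardinal.{u}} (hlam : ℵ₀ ≤ lam) (hA : tweight A < lam) :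
    tweight B < lam := by
  rcases lt_or_ge (tweight A) ℵ₀ with h | h
  · haveI : Finite A := finite_of_tweight_lt_aleph0 h
    haveI : Finite B := Finite.of_surjective f hs
    exact lt_of_lt_of_le tweight_lt_aleph0_of_finite hlam
  · have h2 := tweight_image_le (A := A) (B := B) hf hs
    rw [max_eq_left h] at h2
    exact lt_of_le_of_lt h2 hA


lemma exists_finset_separating {ι : Type u} {K L : Set (ι → ℝ)} (hK : IsCompact K)
    (hL : IsCompact L) (hd : Disjoint K L) :
    ∃ E : Finset ι, ∀ x ∈ K, ∀ z ∈ L, ∃ i ∈ E, x i ≠ z i := by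
  classical
  have hpt : ∀ p : ↥(K ×ˢ L), ∃ (i : ι) (UV : Set ℝ × Set ℝ),
      IsOpen UV.1 ∧ IsOpen UV.2 ∧ Disjoint UV.1 UV.2 ∧
      (p : (ι → ℝ) × (ι → ℝ)).1 i ∈ UV.1 ∧ (p : (ι → ℝ) × (ι → ℝ)).2 i ∈ UV.2 := by
    rintro ⟨⟨x, z⟩, hxz⟩
    rw [Set.mem_prod] at hxz
    have hne : x ≠ z := fun h => Set.disjoint_left.mp hd hxz.1 (h ▸ hxz.2)
    obtain ⟨i, hi⟩ : ∃ i, x i ≠ z i := by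
      by_contra h; push_neg at h; exact hne (funext h)
    obtain ⟨U, V, hU, hV, hxU, hzV, hUV⟩ := t2_separation hi
    exact ⟨i, (U, V), hU, hV, hUV, hxU, hzV⟩
  choose i UV hU hV hUV h1 h2 using hpt
  set W : ↥(K ×ˢ L) → Set ((ι → ℝ) × (ι → ℝ)) := fun p =>
    ((fun q : (ι → ℝ) × (ι → ℝ) => q.1 (i p)) ⁻¹' (UV p).1) ∩
    ((fun q : (ι → ℝ) × (ι → ℝ) => q.2 (i p)) ⁻¹' (UV p).2) with hW
  have hWopen : ∀ p, IsOpen (W p) := fun p =>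
    (((hU p).preimage ((continuous_apply (i p)).comp continuous_fst))).inter
      ((hV p).preimage ((continuous_apply (i p)).comp continuous_snd))
  have hcov : K ×ˢ L ⊆ ⋃ p, W p := fun q hq =>
    mem_iUnion.mpr ⟨⟨q, hq⟩, ⟨h1 ⟨q, hq⟩, h2 ⟨q, hq⟩⟩⟩
  obtain ⟨t, ht⟩ := (hK.prod hL).elim_finite_subcover W hWopen hcov
  refine ⟨t.image i, fun x hx z hz => ?_⟩
  have hmem : (x, z) ∈ K ×ˢ L := Set.mk_mem_prod hx hz
  obtain ⟨p, hpt', hpW⟩ := mem_iUnion₂.mp (ht hmem)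
  refine ⟨i p, Finset.mem_image_of_mem _ hpt', fun heq => ?_⟩
  have hx1 : x (i p) ∈ (UV p).1 := hpW.1
  have hz2 : z (i p) ∈ (UV p).2 := hpW.2
  rw [heq] at hx1
  exact Set.disjoint_left.mp (hUV p) hx1 hz2


lemma nu_le_tweight_range
    {X : Type u} [TopologicalSpace X] [CompactSpace X] [T2Space X]
    {ι : Type u} [LinearOrder ι]
    (ν : Cardinal.{u}) (hν : ℵ₀ ≤ ν)
    (hbound : ∀ A : Set ι, #A < ν → ∃ i : ι, ∀ a ∈ A, a < i)
    (f : ι → C(X, ℝ)) (x y : ι → X)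
    (hagree : ∀ i j : ι, j < i → f j (x i) = f j (y i))
    (hx0 : ∀ i, f i (x i) = 0) (hy1 : ∀ i, f i (y i) = 1) :
    ν ≤ tweight ↥(Set.range (fun a : X => fun i : ι => f i a)) := by
  classical
  set π : X → (ι → ℝ) := fun a => fun i : ι => f i a with hπ
  have hπc : Continuous π := continuous_pi (fun i => (f i).continuous)
  set Z : Set (ι → ℝ) := Set.range π with hZ
  haveI : CompactSpace ↥Z := isCompact_iff_compactSpace.mp (isCompact_range hπc)
  by_contra hlt
  push_neg at hlt
  obtain ⟨B, hB, hcard⟩ := exists_basis_tweight ↥Z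
  have hBlt : #↥B < ν := by rw [hcard]; exact hlt
  set a : ι → ↥Z := fun i => ⟨π (x i), mem_range_self _⟩ with ha
  set b : ι → ↥Z := fun i => ⟨π (y i), mem_range_self _⟩ with hb
  have hab : ∀ i, a i ≠ b i := by
    intro i h
    have := congrArg (fun z : ↥Z => (z : ι → ℝ) i) h
    simp only [a, b, π] at this
    rw [hx0 i, hy1 i] at this
    exact zero_ne_one this
  -- choose basic sets with disjoint closures
  have pair : ∀ i : ι, ∃ PQ : ↥B × ↥B, a i ∈ (PQ.1 : Set ↥Z) ∧ b i ∈ (PQ.2 : Set ↥Z) ∧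
      Disjoint (closure (PQ.1 : Set ↥Z)) (closure (PQ.2 : Set ↥Z)) := by
    intro i
    obtain ⟨O₁, O₂, hO₁, hO₂, haO, hbO, hdis⟩ := t2_separation (hab i)
    obtain ⟨C₁, hC₁n, hC₁c, hC₁s⟩ := exists_mem_nhds_isClosed_subset (hO₁.mem_nhds haO)
    obtain ⟨C₂, hC₂n, hC₂c, hC₂s⟩ := exists_mem_nhds_isClosed_subset (hO₂.mem_nhds hbO)
    obtain ⟨P, hPB, haP, hPs⟩ := hB.exists_subset_of_mem_open (mem_interior_iff_mem_nhds.mpr hC₁n)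
      isOpen_interior
    obtain ⟨Q, hQB, hbQ, hQs⟩ := hB.exists_subset_of_mem_open (mem_interior_iff_mem_nhds.mpr hC₂n)
      isOpen_interior
    refine ⟨(⟨P, hPB⟩, ⟨Q, hQB⟩), haP, hbQ, ?_⟩
    have h1 : closure P ⊆ O₁ :=
      (closure_mono (hPs.trans interior_subset)).trans (by rw [hC₁c.closure_eq]; exact hC₁s)
    have h2 : closure Q ⊆ O₂ :=
      (closure_mono (hQs.trans interior_subset)).trans (by rw [hC₂c.closure_eq]; exact hC₂s)
    exact hdis.mono h1 h2
  choose PQ haPQ hbPQ hdPQ using pair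
  -- supports
  have hsep : ∀ p : ↥B × ↥B, ∃ E : Finset ι,
      Disjoint (closure (p.1 : Set ↥Z)) (closure (p.2 : Set ↥Z)) →
      ∀ u ∈ Subtype.val '' closure (p.1 : Set ↥Z), ∀ w ∈ Subtype.val '' closure (p.2 : Set ↥Z),
        ∃ j ∈ E, u j ≠ w j := by
    intro p
    by_cases hd : Disjoint (closure (p.1 : Set ↥Z)) (closure (p.2 : Set ↥Z))
    · have hK : IsCompact (Subtype.val '' closure (p.1 : Set ↥Z)) :=
        (isClosed_closure.isCompact).image continuous_subtype_val
      have hL : IsCompact (Subtype.val '' closure (p.2 : Set ↥Z)) :=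
        (isClosed_closure.isCompact).image continuous_subtype_val
      have hd' : Disjoint (Subtype.val '' closure (p.1 : Set ↥Z))
          (Subtype.val '' closure (p.2 : Set ↥Z)) :=
        (Set.disjoint_image_iff Subtype.val_injective).mpr hd
      obtain ⟨E, hE⟩ := exists_finset_separating hK hL hd'
      exact ⟨E, fun _ => hE⟩
    · exact ⟨∅, fun h => absurd h hd⟩
  choose E hE using hsep
  set A : Set ι := ⋃ p : ↥B × ↥B, ↑(E p) with hA
  have hAlt : #↥A < ν := by
    rcases lt_or_ge #↥B ℵ₀ with hfin | hinf
    · haveI : Finite ↥B := mk_lt_aleph0_iff.mp hfin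
      have : A.Finite := Set.finite_iUnion (fun p => (E p).finite_toSet)
      exact lt_of_lt_of_le (mk_lt_aleph0_iff.mpr this.to_subtype) hν
    · have h1 : #↥A ≤ #(↥B × ↥B) * ⨆ p : ↥B × ↥B, #↥(↑(E p) : Set ι) := mk_iUnion_le _
      have h2 : (⨆ p : ↥B × ↥B, #↥(↑(E p) : Set ι)) ≤ ℵ₀ := by
        apply ciSup_le'
        intro p
        exact ((E p).finite_toSet.lt_aleph0).le
      have h3 : #(↥B × ↥B) = #↥B := by
        rw [mk_prod]; simp only [lift_id]; exact mul_eq_self hinf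
      calc #↥A ≤ #(↥B × ↥B) * ⨆ p : ↥B × ↥B, #↥(↑(E p) : Set ι) := h1
        _ ≤ #↥B * ℵ₀ := by rw [h3]; exact mul_le_mul_right h2 _
        _ = #↥B := by rw [mul_eq_max hinf le_rfl, max_eq_left hinf]
        _ < ν := hBlt
  obtain ⟨istar, histar⟩ := hbound A hAlt
  set p := PQ istar with hp
  have hspec := hE p (hdPQ istar)
  have hu : ((a istar : ↥Z) : ι → ℝ) ∈ Subtype.val '' closure (p.1 : Set ↥Z) :=
    mem_image_of_mem _ (subset_closure (haPQ istar))
  have hw : ((b istar : ↥Z) : ι → ℝ) ∈ Subtype.val '' closure (p.2 : Set ↥Z) :=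
    mem_image_of_mem _ (subset_closure (hbPQ istar))
  obtain ⟨j, hjE, hj⟩ := hspec _ hu _ hw
  have hjA : j ∈ A := mem_iUnion.mpr ⟨p, hjE⟩
  have : f j (x istar) = f j (y istar) := hagree istar j (histar j hjA)
  exact hj this


lemma tweight_subset_pi_le {ι : Type u} (Z : Set (ι → ℝ)) : tweight ↥Z ≤ max #ι ℵ₀ := by
  obtain ⟨P, hP, hcard⟩ := tweight_pi_le' ι
  exact (tweight_le_of_isInducing IsInducing.subtypeVal).trans
    ((tweight_le_card_basis hP).trans hcard)

lemma bound_of_card_lt {c : Cardinal.{u}} (hreg : c.IsRegular) (A : Set c.ord.ToType)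
    (hA : #A < c) : ∃ i : c.ord.ToType, ∀ a ∈ A, a < i := by
  haveI hwo : IsWellOrder c.ord.ToType (· < ·) := isWellOrder_lt
  have hlsub : Ordinal.lsub (fun a : ↥A => Ordinal.typein ((· < ·) : c.ord.ToType → c.ord.ToType → Prop) a.1)
      < c.ord := by
    apply Ordinal.lsub_lt_ord
    · rw [hreg.cof_eq]; exact hA
    · exact fun a => Ordinal.typein_lt_self a.1
  refine ⟨Ordinal.enum (· < ·) ⟨_, by rw [Ordinal.type_toType]; exact hlsub⟩, fun a ha => ?_⟩
  have h1 := Ordinal.lt_lsub (fun a : ↥A => Ordinal.typein ((· < ·) : c.ord.ToType → c.ord.ToType → Prop) a.1) ⟨a, ha⟩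
  rw [← Ordinal.typein_lt_typein ((· < ·) : c.ord.ToType → c.ord.ToType → Prop)]
  rw [Ordinal.typein_enum _ (by rw [Ordinal.type_toType]; exact hlsub)]
  exact h1

/-- Main construction: a continuous image of weight exactly `lam`. -/
lemma exists_image_tweight_eq (lam : Cardinal.{u}) (hlam : ℵ₀ ≤ lam)
    {X : Type u} [TopologicalSpace X] [CompactSpace X] [T2Space X] (hw : lam ≤ tweight X) :
    ∃ (Y : Type u) (tY : TopologicalSpace Y), T2Space Y ∧ CompactSpace Y ∧
      ∃ g : X → Y, Continuous g ∧ Surjective g ∧ tweight Y = lam := by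
  rcases eq_or_lt_of_le hw with heq | hlt
  · exact ⟨X, ‹_›, ‹_›, ‹_›, id, continuous_id, surjective_id, heq.symm⟩
  set ι := lam.ord.ToType with hι
  have hmkι : #ι = lam := mk_ord_toType lam
  -- the key step lemma
  have key : ∀ (i : ι) (g : ∀ j : ι, j < i → C(X, ℝ)), ∃ t : X × X × C(X, ℝ),
      t.1 ≠ t.2.1 ∧ (∀ (j : ι) (hj : j < i), g j hj t.1 = g j hj t.2.1) ∧
      t.2.2 t.1 = 0 ∧ t.2.2 t.2.1 = 1 := by
    intro i g
    set π : X → ({j : ι // j < i} → ℝ) := fun a => fun j => g j.1 j.2 a with hπdef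
    have hπc : Continuous π := continuous_pi (fun j => (g j.1 j.2).continuous)
    have hnoninj : ¬ Injective π := by
      intro hinj
      have hbij : Bijective (rangeFactorization π) :=
        ⟨fun u v huv => hinj (congrArg Subtype.val huv), rangeFactorization_surjective⟩
      have hcont : Continuous (rangeFactorization π) := hπc.subtype_mk _
      let e := Equiv.ofBijective _ hbij
      have hh : tweight X = tweight ↥(Set.range π) :=
        tweight_eq_of_homeomorph (hcont.homeoOfEquivCompactToT2 (f := e))
      have hb : tweight ↥(Set.range π) ≤ max #{j : ι // j < i} ℵ₀ := tweight_subset_pi_le _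
      have hcard : #{j : ι // j < i} < lam := Cardinal.mk_Iio_ord_toType i
      have : tweight X < tweight X := by
        calc tweight X = tweight ↥(Set.range π) := hh
          _ ≤ max #{j : ι // j < i} ℵ₀ := hb
          _ ≤ lam := max_le hcard.le hlam
          _ < tweight X := hlt
      exact lt_irrefl _ this
    rw [Injective] at hnoninj
    push_neg at hnoninj
    obtain ⟨x, y, hπxy, hxy⟩ := hnoninj
    obtain ⟨f, hf0, hf1, -⟩ := exists_continuous_zero_one_of_isClosed
      (isClosed_singleton (x := x)) (isClosed_singleton (x := y))
      (disjoint_singleton.mpr hxy)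
    refine ⟨(x, y, f), hxy, fun j hj => ?_, hf0 rfl, hf1 rfl⟩
    exact congrFun hπxy ⟨j, hj⟩
  -- transfinite recursion
  haveI : IsWellOrder ι (· < ·) := isWellOrder_lt
  have wf : WellFounded ((· < ·) : ι → ι → Prop) := (wellFoundedLT_toType lam.ord).wf
  set F : ι → X × X × C(X, ℝ) :=
    WellFounded.fix wf (fun i rec => (key i (fun j hj => (rec j hj).2.2)).choose) with hFdef
  have hFeq : ∀ i : ι, F i = (key i (fun j _ => (F j).2.2)).choose := by
    intro i
    exact WellFounded.fix_eq wf _ i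
  set x : ι → X := fun i => (F i).1 with hx
  set y : ι → X := fun i => (F i).2.1 with hy
  set f : ι → C(X, ℝ) := fun i => (F i).2.2 with hf
  have hspec : ∀ i : ι, (F i).1 ≠ (F i).2.1 ∧
      (∀ (j : ι) (_ : j < i), (F j).2.2 (F i).1 = (F j).2.2 (F i).2.1) ∧
      (F i).2.2 (F i).1 = 0 ∧ (F i).2.2 (F i).2.1 = 1 := by
    intro i
    rw [hFeq i]
    exact (key i (fun j _ => (F j).2.2)).choose_spec
  have hagree : ∀ i j : ι, j < i → f j (x i) = f j (y i) := fun i j hj => (hspec i).2.1 j hj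
  have hx0 : ∀ i, f i (x i) = 0 := fun i => (hspec i).2.2.1
  have hy1 : ∀ i, f i (y i) = 1 := fun i => (hspec i).2.2.2
  -- the image space
  set π : X → (ι → ℝ) := fun a => fun i : ι => f i a with hπdef
  have hπc : Continuous π := continuous_pi (fun i => (f i).continuous)
  set Z : Set (ι → ℝ) := Set.range π with hZdef
  haveI hZcomp : CompactSpace ↥Z := isCompact_iff_compactSpace.mp (isCompact_range hπc)
  have hupper : tweight ↥Z ≤ lam := by
    have := tweight_subset_pi_le Z
    rwa [hmkι, max_eq_left hlam] at this
  have hlower : lam ≤ tweight ↥Z := by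
    by_contra hYlt
    push_neg at hYlt
    obtain ⟨ν, hνreg, hνle, hYν⟩ : ∃ ν : Cardinal.{u}, ν.IsRegular ∧ ν ≤ lam ∧ tweight ↥Z < ν := by
      by_cases hreg : lam.IsRegular
      · exact ⟨lam, hreg, le_rfl, hYlt⟩
      · refine ⟨Order.succ (max (tweight ↥Z) ℵ₀), isRegular_succ (le_max_right _ _), ?_, ?_⟩
        · rw [Order.succ_le_iff]
          exact max_lt hYlt (lt_of_le_of_ne hlam (fun h => hreg (h ▸ isRegular_aleph0)))
        · exact lt_of_le_of_lt (le_max_left _ _) (Order.lt_succ _)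
    have hνord : ν.ord ≤ lam.ord := Cardinal.ord_le_ord.mpr hνle
    haveI : IsWellOrder ν.ord.ToType (· < ·) := isWellOrder_lt
    set e : ν.ord.ToType → ι := fun k =>
      Ordinal.enum (· < ·) ⟨Ordinal.typein ((· < ·) : ν.ord.ToType → ν.ord.ToType → Prop) k,
        by rw [Ordinal.type_toType]; exact lt_of_lt_of_le (Ordinal.typein_lt_self k) hνord⟩
        with hedef
    have hemono : StrictMono e := by
      intro k k' h
      apply Ordinal.enum_lt_enum.mpr
      exact Subtype.mk_lt_mk.mpr ((Ordinal.typein_lt_typein _).mpr h)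
    have hnu := nu_le_tweight_range (X := X) (ι := ν.ord.ToType) ν hνreg.aleph0_le
      (fun A hA => bound_of_card_lt hνreg A hA)
      (fun k => f (e k)) (fun k => x (e k)) (fun k => y (e k))
      (fun i j hj => hagree (e i) (e j) (hemono hj))
      (fun k => hx0 (e k)) (fun k => hy1 (e k))
    set π' : X → (ν.ord.ToType → ℝ) := fun a => fun k => f (e k) a with hπ'def
    have hρ : ∀ z : ↥Z, (fun k => (z : ι → ℝ) (e k)) ∈ Set.range π' := by
      rintro ⟨-, a, rfl⟩
      exact ⟨a, rfl⟩
    set ρ : ↥Z → ↥(Set.range π') := fun z => ⟨fun k => (z : ι → ℝ) (e k), hρ z⟩ with hρdef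
    have hρc : Continuous ρ := by
      apply Continuous.subtype_mk
      exact continuous_pi (fun k => (continuous_apply (e k)).comp continuous_subtype_val)
    have hρs : Surjective ρ := by
      rintro ⟨-, a, rfl⟩
      exact ⟨⟨π a, mem_range_self a⟩, rfl⟩
    have hcontr := tweight_image_lt hρc hρs hνreg.aleph0_le hYν
    exact absurd hnu (not_le.mpr hcontr)
  exact ⟨↥Z, inferInstance, inferInstance, hZcomp, rangeFactorization π,
    hπc.subtype_mk _, rangeFactorization_surjective, le_antisymm hupper hlower⟩


end Aux

section Aux2
open TopologicalSpace Topology Classical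

/-- Theorem 3.2 (tm:GD). -/
theorem statement7 (lam : Cardinal.{u}) (hlam : ℵ₀ ≤ lam)
    {X : Type u} [TopologicalSpace X] [CompactSpace X] [T2Space X]
    (hG : InGamma lam X) (hD : InDelta lam X) :
    ∃ D : Set X, Dense D ∧ tdensity ↥D = lam := by
  classical
  obtain ⟨hwX, S, hSdense, hSsmall, hSimage⟩ := hD
  obtain ⟨Y, tY, hT2Y, hCompY, g, hgc, hgs, hwY⟩ := exists_image_tweight_eq lam hlam hwX
  -- fibers have density at most lam
  have hfibd : ∀ y : Y, tdensity ↥(g ⁻¹' {y}) ≤ lam := by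
    intro y
    apply hG
    refine ⟨(isClosed_singleton).preimage hgc, ?_⟩
    obtain ⟨BY, hBY, hBYcard⟩ := exists_basis_tweight Y
    rw [hwY] at hBYcard
    refine ⟨(preimage g) '' {U | U ∈ BY ∧ y ∈ U}, ?_, ?_, ?_⟩
    · rintro - ⟨U, ⟨hUB, _⟩, rfl⟩
      exact (hBY.isOpen hUB).preimage hgc
    · calc #↥((preimage g) '' {U | U ∈ BY ∧ y ∈ U}) ≤ #↥{U | U ∈ BY ∧ y ∈ U} := mk_image_le
        _ ≤ #↥BY := mk_le_mk_of_subset (fun U hU => hU.1)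
        _ ≤ lam := hBYcard.le
    · ext x
      simp only [mem_preimage, mem_singleton_iff, mem_sInter]
      constructor
      · rintro hx - ⟨U, ⟨hUB, hyU⟩, rfl⟩
        rw [mem_preimage, hx]; exact hyU
      · intro h
        by_contra hne
        obtain ⟨U, hUB, hyU, hUs⟩ := hBY.exists_subset_of_mem_open
          (show y ∈ ({g x}ᶜ : Set Y) from fun hm => hne (mem_singleton_iff.mp hm).symm)
          (isOpen_compl_singleton)
        exact hUs (h _ ⟨U, ⟨hUB, hyU⟩, rfl⟩) rfl
  -- dense small subsets of fibers
  have hfibE : ∀ y : Y, ∃ E : Set X, E ⊆ g ⁻¹' {y} ∧ #↥E ≤ lam ∧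
      ∀ W : Set X, IsOpen W → (W ∩ g ⁻¹' {y}).Nonempty → (W ∩ E).Nonempty := by
    intro y
    obtain ⟨s, hsdense, hscard⟩ := exists_dense_tdensity ↥(g ⁻¹' {y})
    refine ⟨Subtype.val '' s, Subtype.coe_image_subset _ _, ?_, ?_⟩
    · rw [mk_image_eq Subtype.val_injective, hscard]; exact hfibd y
    · rintro W hW ⟨w, hwW, hwf⟩
      have hne : ((Subtype.val ⁻¹' W : Set ↥(g ⁻¹' {y}))).Nonempty := ⟨⟨w, hwf⟩, hwW⟩
      obtain ⟨e, heW, hes⟩ := hsdense.inter_open_nonempty _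
        (hW.preimage continuous_subtype_val) hne
      exact ⟨e.1, heW, mem_image_of_mem _ hes⟩
  choose E hEsub hEcard hEdense using hfibE
  have hgScard : #↥(g '' S) = lam := hSimage Y tY hT2Y g hgc hgs hwY
  set D : Set X := ⋃ z : ↥(g '' S), E z.1 with hDdef
  have hDfib : ∀ d ∈ D, g d ∈ g '' S := by
    rintro d hd
    obtain ⟨z, hz⟩ := mem_iUnion.mp hd
    have := hEsub z.1 hz
    rw [mem_preimage, mem_singleton_iff] at this
    rw [this]; exact z.2
  have hDdense : Dense D := by
    rw [dense_iff_inter_open]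
    intro U hU hUne
    obtain ⟨s, hsU, hsS⟩ := hSdense.inter_open_nonempty U hU hUne
    have hfib : (U ∩ g ⁻¹' {g s}).Nonempty := ⟨s, hsU, rfl⟩
    obtain ⟨e, heU, heE⟩ := hEdense (g s) U hU hfib
    exact ⟨e, heU, mem_iUnion.mpr ⟨⟨g s, mem_image_of_mem g hsS⟩, heE⟩⟩
  have hDcard : #↥D ≤ lam := by
    calc #↥D ≤ #↥(g '' S) * ⨆ z : ↥(g '' S), #↥(E z.1) := mk_iUnion_le _
      _ ≤ lam * lam := by
          apply mul_le_mul'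
          · exact hgScard.le
          · exact ciSup_le' (fun z => hEcard z.1)
      _ = lam := mul_eq_self hlam
  refine ⟨D, hDdense, le_antisymm ?_ ?_⟩
  · have h0 : tdensity ↥D ≤ #↥(univ : Set ↥D) := tdensity_le_card_dense dense_univ
    rw [mk_univ] at h0
    exact h0.trans hDcard
  · apply le_tdensity
    intro s hs
    by_contra hslt
    push_neg at hslt
    set D' : Set X := Subtype.val '' s with hD'def
    have hD'card : #↥D' < lam := by rw [mk_image_eq Subtype.val_injective]; exact hslt
    have hD'dense : Dense D' := by
      have h1 : D ⊆ closure D' := by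
        intro d hd
        have h2 : (⟨d, hd⟩ : ↥D) ∈ closure s := hs _
        have h3 : d ∈ Subtype.val '' closure s := mem_image_of_mem _ h2
        exact (image_closure_subset_closure_image continuous_subtype_val) h3
      have h4 := closure_mono h1
      rw [closure_closure] at h4
      rw [dense_iff_closure_eq]
      exact eq_univ_of_univ_subset (by rw [← hDdense.closure_eq]; exact h4)
    set Z' : Set Y := g '' D' with hZ'def
    have hZ'S : Z' ⊆ g '' S := by
      rintro - ⟨d, hd, rfl⟩
      exact hDfib d (Subtype.coe_image_subset _ _ hd)
    have hsel : ∀ z : ↥Z', ∃ t : X, t ∈ S ∧ g t = z.1 := by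
      intro z
      obtain ⟨t, htS, htg⟩ := hZ'S z.2
      exact ⟨t, htS, htg⟩
    choose sel hselS hselg using hsel
    set T' : Set X := Set.range sel with hT'def
    have hT'S : T' ⊆ S := by rintro - ⟨z, rfl⟩; exact hselS z
    have hT'card : #↥T' < lam := by
      calc #↥T' ≤ #↥Z' := mk_range_le
        _ ≤ #↥D' := mk_image_le
        _ < lam := hD'card
    have hclT : tweight ↥(closure T') < lam := hSsmall T' hT'S hT'card
    -- closure T' maps onto Y
    have hZ'dense : Dense Z' := by
      rw [dense_iff_closure_eq]
      apply eq_univ_of_univ_subset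
      calc (univ : Set Y) = g '' univ := by rw [image_univ, hgs.range_eq]
        _ = g '' closure D' := by rw [hD'dense.closure_eq]
        _ ⊆ closure (g '' D') := image_closure_subset_closure_image hgc
    have hsurjT : Surjective (fun t : ↥(closure T') => g t.1) := by
      intro y'
      have himg : IsClosed (g '' closure T') :=
        ((isClosed_closure.isCompact).image hgc).isClosed
      have hT'Z : Z' ⊆ g '' closure T' := by
        rintro z hz
        exact ⟨sel ⟨z, hz⟩, subset_closure (mem_range_self _), hselg ⟨z, hz⟩⟩
      have : closure Z' ⊆ g '' closure T' := closure_minimal hT'Z himg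
      rw [hZ'dense.closure_eq] at this
      obtain ⟨t, ht, htg⟩ := this (mem_univ y')
      exact ⟨⟨t, ht⟩, htg⟩
    haveI : CompactSpace ↥(closure T') :=
      isCompact_iff_compactSpace.mp (isClosed_closure.isCompact)
    have hcontr := tweight_image_lt (f := fun t : ↥(closure T') => g t.1)
      (hgc.comp continuous_subtype_val) hsurjT hlam hclT
    rw [hwY] at hcontr
    exact lt_irrefl lam hcontr


end Aux2
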